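/- Let d₀ ≥ 1 be an integer, C > 0, and r > 0 with C r² ≥ 2 d₀. Then ∫_{{h ∈ ℝ^{d₀} : ‖h‖₂ > r}} ‖h‖₂² · exp(−C‖h‖₂²/2) dh ≤ (2 d₀ π^{d₀/2} / (C Γ(d₀/2 + 1))) · r^{d₀} · exp(−C r²/2). -/

import Mathlib

open MeasureTheory Real Set Filter



lemma aux_integrableOn (n : ℕ) {b r : ℝ} (hb : 0 < b) (hr : 0 < r) :
    IntegrableOn (fun y : ℝ => y ^ n * Real.exp (-b * y ^ 2)) (Ioi r) := by
  have h := (integrableOn_rpow_mul_exp_neg_mul_sq hb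
      (s := (n : ℝ)) (lt_of_lt_of_le neg_one_lt_zero (Nat.cast_nonneg n))).mono_set
      (Ioi_subset_Ioi hr.le)
  exact h.congr_fun (fun x _ => by dsimp only; rw [Real.rpow_natCast]) measurableSet_Ioi

lemma aux_tendsto (n : ℕ) {b : ℝ} (hb : 0 < b) :
    Tendsto (fun y : ℝ => y ^ n * Real.exp (-b * y ^ 2)) atTop (nhds 0) := by
  have h := (rpow_mul_exp_neg_mul_sq_isLittleO_exp_neg hb (n : ℝ)).tendsto_zero_of_tendsto
      (tendsto_exp_atBot.comp <| tendsto_id.const_mul_atTop_of_neg (neg_lt_zero.mpr one_half_pos))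
  simpa [Real.rpow_natCast] using h

lemma oneD (d₀ : ℕ) (hd₀ : 1 ≤ d₀) {C r : ℝ} (hC : 0 < C) (hr : 0 < r)
    (hCr : 2 * (d₀ : ℝ) ≤ C * r ^ 2) :
    ∫ y in Ioi r, y ^ (d₀ + 1) * Real.exp (-(C / 2) * y ^ 2)
      ≤ 2 / C * (r ^ d₀ * Real.exp (-(C / 2) * r ^ 2)) := by
  set g : ℝ → ℝ := fun y => y ^ d₀ * Real.exp (-(C / 2) * y ^ 2) with hg
  set f' : ℝ → ℝ := fun y =>
    (d₀ : ℝ) * (y ^ (d₀ - 1) * Real.exp (-(C / 2) * y ^ 2))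
      - C * (y ^ (d₀ + 1) * Real.exp (-(C / 2) * y ^ 2)) with hf'
  have hb : 0 < C / 2 := half_pos hC
  have hderiv : ∀ x ∈ Ici r, HasDerivAt g (f' x) x := by
    intro x _
    have h1 : HasDerivAt (fun y : ℝ => Real.exp (-(C / 2) * y ^ 2))
        (Real.exp (-(C / 2) * x ^ 2) * (-(C / 2) * (2 * x ^ 1))) x :=
      (((hasDerivAt_pow 2 x).const_mul (-(C / 2)))).exp
    have h2 : HasDerivAt g _ x := (hasDerivAt_pow d₀ x).fun_mul h1
    convert h2 using 1
    simp only [hf']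
    have hd : d₀ - 1 + 1 = d₀ := Nat.succ_pred_eq_of_pos hd₀
    have hx1 : x ^ d₀ = x ^ (d₀ - 1) * x := by rw [← pow_succ, hd]
    have hx2 : x ^ (d₀ + 1) = x ^ (d₀ - 1) * x ^ 2 := by
      rw [← pow_add]; congr 1; omega
    rw [hx1, hx2]; ring
  have f'int : IntegrableOn f' (Ioi r) :=
    ((aux_integrableOn (d₀ - 1) hb hr).const_mul _).sub
      ((aux_integrableOn (d₀ + 1) hb hr).const_mul _)
  have htend : Tendsto g atTop (nhds 0) := aux_tendsto d₀ hb
  have hFTC : ∫ y in Ioi r, f' y = 0 - g r :=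
    integral_Ioi_of_hasDerivAt_of_tendsto' hderiv f'int htend
  have hkey : ∫ y in Ioi r, C / 2 * (y ^ (d₀ + 1) * Real.exp (-(C / 2) * y ^ 2))
      ≤ ∫ y in Ioi r, -f' y := by
    refine setIntegral_mono_on ((aux_integrableOn (d₀ + 1) hb hr).const_mul _)
      f'int.neg measurableSet_Ioi ?_
    intro y hy
    have hy0 : 0 < y := hr.trans hy
    have hyr : C * r ^ 2 ≤ C * y ^ 2 := by
      have : r ^ 2 ≤ y ^ 2 := by nlinarith [le_of_lt (mem_Ioi.mp hy)]
      nlinarith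
    have hmain : (d₀ : ℝ) * y ^ (d₀ - 1) ≤ C / 2 * y ^ (d₀ + 1) := by
      have hx2 : y ^ (d₀ + 1) = y ^ (d₀ - 1) * y ^ 2 := by
        rw [← pow_add]; congr 1; omega
      rw [hx2]
      have hp : (0:ℝ) ≤ y ^ (d₀ - 1) := by positivity
      nlinarith
    have he : (0:ℝ) < Real.exp (-(C / 2) * y ^ 2) := Real.exp_pos _
    simp only [hf']
    nlinarith
  rw [MeasureTheory.integral_const_mul, MeasureTheory.integral_neg, hFTC] at hkey
  simp only [hg, zero_sub, neg_neg] at hkey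
  have h2 := (le_div_iff₀' hb).mpr hkey
  calc ∫ y in Ioi r, y ^ (d₀ + 1) * Real.exp (-(C / 2) * y ^ 2)
      ≤ (r ^ d₀ * Real.exp (-(C / 2) * r ^ 2)) / (C / 2) := h2
    _ = 2 / C * (r ^ d₀ * Real.exp (-(C / 2) * r ^ 2)) := by
        field_simp


/-- Second-moment Gaussian tail integral bound: for `C r² ≥ 2 d₀`,
`∫_{‖h‖ > r} ‖h‖² exp(−C‖h‖²/2) dh ≤ (2 d₀ π^{d₀/2} / (C Γ(d₀/2 + 1))) r^{d₀} exp(−C r²/2)`. -/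
theorem gaussian_tail_second_moment_bound
    (d₀ : ℕ) (hd₀ : 1 ≤ d₀) (C r : ℝ) (hC : 0 < C) (hr : 0 < r)
    (hCr : 2 * (d₀ : ℝ) ≤ C * r ^ 2) :
    (∫ h in {h : EuclideanSpace ℝ (Fin d₀) | r < ‖h‖}, ‖h‖ ^ 2 * Real.exp (-C * ‖h‖ ^ 2 / 2))
      ≤ 2 * (d₀ : ℝ) * Real.pi ^ ((d₀ : ℝ) / 2) / (C * Real.Gamma ((d₀ : ℝ) / 2 + 1))
          * r ^ (d₀ : ℝ) * Real.exp (-C * r ^ 2 / 2) := by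
  haveI : Nonempty (Fin d₀) := ⟨⟨0, hd₀⟩⟩
  set E := EuclideanSpace ℝ (Fin d₀)
  haveI : Nontrivial E := inferInstance
  set F : ℝ → ℝ := fun y => y ^ 2 * Real.exp (-C * y ^ 2 / 2) with hF
  have hmeas : MeasurableSet {h : E | r < ‖h‖} :=
    (isOpen_lt continuous_const continuous_norm).measurableSet
  have step1 : (∫ h in {h : E | r < ‖h‖}, ‖h‖ ^ 2 * Real.exp (-C * ‖h‖ ^ 2 / 2))
      = ∫ h : E, (Set.indicator (Ioi r) F) ‖h‖ := by
    rw [← integral_indicator hmeas]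
    refine integral_congr_ae (Filter.Eventually.of_forall fun h => ?_)
    exact (Set.indicator_comp_right (fun h : E => ‖h‖) (g := F) (s := Ioi r)).symm
  have hdim : Module.finrank ℝ E = d₀ := finrank_euclideanSpace_fin
  have step2 := integral_fun_norm_addHaar (volume : Measure E) (Set.indicator (Ioi r) F)
  rw [hdim] at step2
  have step3 : ∫ y in Ioi (0:ℝ), y ^ (d₀ - 1) • Set.indicator (Ioi r) F y
      = ∫ y in Ioi r, y ^ (d₀ + 1) * Real.exp (-(C / 2) * y ^ 2) := by
    have hpt : ∀ y : ℝ, y ^ (d₀ - 1) • Set.indicator (Ioi r) F y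
        = Set.indicator (Ioi r) (fun y => y ^ (d₀ + 1) * Real.exp (-(C / 2) * y ^ 2)) y := by
      intro y
      by_cases hy : y ∈ Ioi r
      · rw [Set.indicator_of_mem hy, Set.indicator_of_mem hy, smul_eq_mul]
        have h1 : y ^ (d₀ + 1) = y ^ (d₀ - 1) * y ^ 2 := by
          rw [← pow_add]; congr 1; omega
        simp only [hF]
        rw [h1, show -(C / 2) * y ^ 2 = -C * y ^ 2 / 2 by ring]
        ring
      · rw [Set.indicator_of_notMem hy, Set.indicator_of_notMem hy, smul_zero]
    simp_rw [hpt]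
    rw [setIntegral_indicator measurableSet_Ioi, Set.Ioi_inter_Ioi,
      sup_eq_right.mpr hr.le]
  have hvol : (volume (Metric.ball (0 : E) 1)).toReal
      = Real.sqrt Real.pi ^ d₀ / Real.Gamma ((d₀ : ℝ) / 2 + 1) := by
    rw [EuclideanSpace.volume_ball]
    simp only [Fintype.card_fin, ENNReal.ofReal_one, one_pow, one_mul]
    rw [ENNReal.toReal_ofReal]
    positivity
  have h1D : ∫ y in Ioi r, y ^ (d₀ + 1) * Real.exp (-(C / 2) * y ^ 2)
      ≤ 2 / C * (r ^ d₀ * Real.exp (-(C / 2) * r ^ 2)) :=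
    oneD d₀ hd₀ hC hr hCr
  rw [step1, step2, measureReal_def, hvol, step3, nsmul_eq_mul, smul_eq_mul]
  have hΓ : 0 < Real.Gamma ((d₀ : ℝ) / 2 + 1) := Real.Gamma_pos_of_pos (by positivity)
  have hnn : (0:ℝ) ≤ (d₀ : ℝ) * (Real.sqrt Real.pi ^ d₀ / Real.Gamma ((d₀ : ℝ) / 2 + 1)) := by
    positivity
  calc (d₀ : ℝ) * (Real.sqrt Real.pi ^ d₀ / Real.Gamma ((d₀ : ℝ) / 2 + 1) *
          ∫ y in Ioi r, y ^ (d₀ + 1) * Real.exp (-(C / 2) * y ^ 2))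
      ≤ (d₀ : ℝ) * (Real.sqrt Real.pi ^ d₀ / Real.Gamma ((d₀ : ℝ) / 2 + 1) *
          (2 / C * (r ^ d₀ * Real.exp (-(C / 2) * r ^ 2)))) := by
        apply mul_le_mul_of_nonneg_left _ (Nat.cast_nonneg d₀)
        exact mul_le_mul_of_nonneg_left h1D (by positivity)
    _ = 2 * (d₀ : ℝ) * Real.pi ^ ((d₀ : ℝ) / 2) / (C * Real.Gamma ((d₀ : ℝ) / 2 + 1))
          * r ^ (d₀ : ℝ) * Real.exp (-C * r ^ 2 / 2) := by
        rw [show Real.sqrt Real.pi ^ d₀ = Real.pi ^ ((d₀ : ℝ) / 2) by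
          rw [Real.sqrt_eq_rpow,
            ← Real.rpow_natCast (Real.pi ^ ((1:ℝ)/2)) d₀, ← Real.rpow_mul Real.pi_pos.le]
          congr 1
          ring]
        rw [← Real.rpow_natCast r d₀,
          show -(C / 2) * r ^ 2 = -C * r ^ 2 / 2 by ring]
        field_simp
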